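/- Let A be the generator of an irreducible continuous-time Markov chain on a finite set S with unique invariant (ergodic) probability measure μ of full support, i.e. A is a real S×S matrix with A_{ij} ≥ 0 for i ≠ j, zero row sums, μ_i > 0 for all i, and Σ_i μ_i A_{ij} = 0 for all j. Let sym(A) = (A + A*)/2 where (A*)_{ij} = μ_j A_{ji}/μ_i is the adjoint of A in L²(μ). Then for every v : S → ℝ with Σ_i μ_i v_i = 0, and any u, w : S → ℝ satisfying A u = −v and sym(A) w = −v, one has ⟨v, u⟩_μ ≤ ⟨v, w⟩_μ, where ⟨f, g⟩_μ = Σ_i μ_i f_i g_i. (That is, ⟨v, −A⁻¹v⟩_μ ≤ ⟨v, −sym(A)⁻¹v⟩_μ: the active part of the diffusion coefficient is maximized by the reversible state process.) -/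

import Mathlib

open Matrix Finset

/-- inner product against mulVec as a double sum -/
lemma ip_mulVec {S : Type*} [Fintype S] (B : Matrix S S ℝ) (μ f g : S → ℝ) :
    ∑ i, μ i * (B *ᵥ f) i * g i = ∑ i, ∑ j, μ i * B i j * f j * g i := by
  refine Finset.sum_congr rfl fun i _ => ?_
  simp [Matrix.mulVec, dotProduct, Finset.sum_mul, Finset.mul_sum]
  exact Finset.sum_congr rfl fun j _ => by ring

/-- quadratic form of a generator with invariant measure is nonpositive -/
lemma gen_quad_nonpos {S : Type*} [Fintype S] [DecidableEq S]
    (B : Matrix S S ℝ) (μ : S → ℝ)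
    (h_off : ∀ i j, i ≠ j → 0 ≤ B i j)
    (h_row : ∀ i, ∑ j, B i j = 0)
    (hμ_pos : ∀ i, 0 < μ i)
    (h_inv : ∀ j, ∑ i, μ i * B i j = 0)
    (f : S → ℝ) :
    ∑ i, μ i * (B *ᵥ f) i * f i ≤ 0 := by
  have key : ∑ i, ∑ j, μ i * B i j * (f i - f j)^2
      = -2 * ∑ i, μ i * (B *ᵥ f) i * f i := by
    rw [ip_mulVec]
    have e1 : ∑ i, ∑ j, μ i * B i j * f i ^ 2 = 0 := by
      refine Finset.sum_eq_zero fun i _ => ?_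
      have : ∑ j, μ i * B i j * f i ^ 2 = (μ i * f i ^ 2) * ∑ j, B i j := by
        rw [Finset.mul_sum]; refine Finset.sum_congr rfl fun j _ => by ring
      rw [this, h_row i, mul_zero]
    have e3 : ∑ i, ∑ j, μ i * B i j * f j ^ 2 = 0 := by
      rw [Finset.sum_comm]
      refine Finset.sum_eq_zero fun j _ => ?_
      have : ∑ i, μ i * B i j * f j ^ 2 = (f j ^ 2) * ∑ i, μ i * B i j := by
        rw [Finset.mul_sum]; refine Finset.sum_congr rfl fun i _ => by ring
      rw [this, h_inv j, mul_zero]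
    have expand : ∑ i, ∑ j, μ i * B i j * (f i - f j)^2
        = (∑ i, ∑ j, μ i * B i j * f i ^ 2)
          - 2 * (∑ i, ∑ j, μ i * B i j * f j * f i)
          + (∑ i, ∑ j, μ i * B i j * f j ^ 2) := by
      rw [Finset.mul_sum, ← Finset.sum_sub_distrib, ← Finset.sum_add_distrib]
      refine Finset.sum_congr rfl fun i _ => ?_
      rw [Finset.mul_sum, ← Finset.sum_sub_distrib, ← Finset.sum_add_distrib]
      refine Finset.sum_congr rfl fun j _ => by ring
    rw [expand, e1, e3]; ring
  have nonneg : 0 ≤ ∑ i, ∑ j, μ i * B i j * (f i - f j)^2 := by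
    refine Finset.sum_nonneg fun i _ => Finset.sum_nonneg fun j _ => ?_
    by_cases h : i = j
    · subst h; simp
    · exact mul_nonneg (mul_nonneg (hμ_pos i).le (h_off i j h)) (sq_nonneg _)
  nlinarith [key, nonneg]

theorem active_diffusion_reversible_max
    {S : Type*} [Fintype S] [DecidableEq S] [Nonempty S]
    (A : Matrix S S ℝ) (μ : S → ℝ)
    -- A is a Markov generator
    (hA_off : ∀ i j, i ≠ j → 0 ≤ A i j)
    (hA_row : ∀ i, ∑ j, A i j = 0)
    -- μ is a probability measure with full support
    (hμ_pos : ∀ i, 0 < μ i)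
    (hμ_sum : ∑ i, μ i = 1)
    -- μ is invariant for A
    (hμ_inv : ∀ j, ∑ i, μ i * A i j = 0)
    -- irreducibility/ergodicity: the kernel of A consists of the constant functions
    (h_erg : ∀ f : S → ℝ, A *ᵥ f = 0 → ∃ c : ℝ, ∀ i, f i = c)
    -- sym(A) = (A + A*)/2 where (A*)_{ij} = μ_j A_{ji} / μ_i
    (symA : Matrix S S ℝ)
    (h_sym : ∀ i j, symA i j = (A i j + μ j * A j i / μ i) / 2)
    (v u w : S → ℝ)
    (hv : ∑ i, μ i * v i = 0)
    (hu : A *ᵥ u = -v)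
    (hw : symA *ᵥ w = -v) :
    ∑ i, μ i * v i * u i ≤ ∑ i, μ i * v i * w i := by
  -- μ_i symA_ij = (μ_i A_ij + μ_j A_ji)/2
  have hμsym : ∀ i j, μ i * symA i j = (μ i * A i j + μ j * A j i) / 2 := by
    intro i j
    have hi := (hμ_pos i).ne'
    rw [h_sym i j]
    field_simp
  have hsa : ∀ i j, μ i * symA i j = μ j * symA j i := by
    intro i j; rw [hμsym, hμsym]; ring
  -- symA is also a generator with invariant μ
  have hB_off : ∀ i j, i ≠ j → 0 ≤ symA i j := by
    intro i j h
    rw [h_sym i j]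
    have h1 := hA_off i j h
    have h2 := hA_off j i (Ne.symm h)
    have := (hμ_pos i)
    have := (hμ_pos j)
    positivity
  have hB_row : ∀ i, ∑ j, symA i j = 0 := by
    intro i
    have : ∑ j, μ i * symA i j = 0 := by
      simp only [hμsym]
      rw [← Finset.sum_div, Finset.sum_add_distrib, ← Finset.mul_sum, hA_row i, hμ_inv i]
      norm_num
    have hμi := (hμ_pos i).ne'
    rw [← Finset.mul_sum] at this
    exact (mul_eq_zero.mp this).resolve_left hμi
  have hB_inv : ∀ j, ∑ i, μ i * symA i j = 0 := by
    intro j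
    simp only [hμsym]
    rw [← Finset.sum_div, Finset.sum_add_distrib, hμ_inv j, ← Finset.mul_sum, hA_row j]
    norm_num
  -- quadratic form of A equals that of symA
  have hQ : ∀ f : S → ℝ, ∑ i, μ i * (A *ᵥ f) i * f i = ∑ i, μ i * (symA *ᵥ f) i * f i := by
    intro f
    rw [ip_mulVec, ip_mulVec]
    have swap : ∑ i, ∑ j, μ j * A j i * f j * f i = ∑ i, ∑ j, μ i * A i j * f j * f i := by
      rw [Finset.sum_comm]
      refine Finset.sum_congr rfl fun i _ => Finset.sum_congr rfl fun j _ => by ring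
    calc ∑ i, ∑ j, μ i * A i j * f j * f i
        = (∑ i, ∑ j, μ i * A i j * f j * f i + ∑ i, ∑ j, μ j * A j i * f j * f i) / 2 := by
          rw [swap]; ring
      _ = ∑ i, ∑ j, μ i * symA i j * f j * f i := by
          rw [← Finset.sum_add_distrib, Finset.sum_div]
          refine Finset.sum_congr rfl fun i _ => ?_
          rw [← Finset.sum_add_distrib, Finset.sum_div]
          refine Finset.sum_congr rfl fun j _ => ?_
          rw [hμsym]; ring
  -- symmetry of the bilinear form of symA
  have hbilsym : ∀ f g : S → ℝ, ∑ i, μ i * (symA *ᵥ f) i * g i = ∑ i, μ i * (symA *ᵥ g) i * f i := by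
    intro f g
    rw [ip_mulVec, ip_mulVec, Finset.sum_comm]
    refine Finset.sum_congr rfl fun i _ => Finset.sum_congr rfl fun j _ => ?_
    linear_combination (f i * g j) * hsa j i
  set S1 := ∑ i, μ i * v i * u i with hS1
  set S2 := ∑ i, μ i * v i * w i with hS2
  have hvi : ∀ i, v i = -(A *ᵥ u) i := by intro i; rw [hu]; simp
  have hvi' : ∀ i, v i = -(symA *ᵥ w) i := by intro i; rw [hw]; simp
  have e1 : ∑ i, μ i * (symA *ᵥ u) i * u i = -S1 := by
    rw [← hQ u, hS1]
    rw [← Finset.sum_neg_distrib]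
    refine Finset.sum_congr rfl fun i _ => ?_
    rw [hvi i]; ring
  have e2 : ∑ i, μ i * (symA *ᵥ w) i * w i = -S2 := by
    rw [hS2, ← Finset.sum_neg_distrib]
    refine Finset.sum_congr rfl fun i _ => ?_
    rw [hvi' i]; ring
  have e3 : ∑ i, μ i * (symA *ᵥ w) i * u i = -S1 := by
    rw [hS1, ← Finset.sum_neg_distrib]
    refine Finset.sum_congr rfl fun i _ => ?_
    rw [hvi' i]; ring
  have e4 : ∑ i, μ i * (symA *ᵥ u) i * w i = -S1 := by rw [hbilsym u w, e3]
  have hq := gen_quad_nonpos symA μ hB_off hB_row hμ_pos hB_inv (u - w)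
  have expand : ∑ i, μ i * (symA *ᵥ (u - w)) i * (u - w) i
      = (∑ i, μ i * (symA *ᵥ u) i * u i) - (∑ i, μ i * (symA *ᵥ u) i * w i)
        - (∑ i, μ i * (symA *ᵥ w) i * u i) + (∑ i, μ i * (symA *ᵥ w) i * w i) := by
    have hmv : ∀ i, (symA *ᵥ (u - w)) i = (symA *ᵥ u) i - (symA *ᵥ w) i := by
      intro i; rw [Matrix.mulVec_sub]; simp
    simp only [hmv, Pi.sub_apply]
    rw [← Finset.sum_sub_distrib, ← Finset.sum_sub_distrib, ← Finset.sum_add_distrib]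
    exact Finset.sum_congr rfl fun i _ => by ring
  rw [expand, e1, e2, e3, e4] at hq
  linarith
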